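/- Let V be real analytic on (0,∞) and let r̄ be a degenerate critical point of V_eff(·, ℓ̄) = V + ℓ̄/(2r²) which is neither a local maximum nor a local minimum (i.e. the first nonvanishing derivative ∂_r^{n+1}V_eff(r̄, ℓ̄) = a ≠ 0 has n even, n ≥ 2). Then for ℓ near ℓ̄ with (ℓ − ℓ̄)/a < 0, V_eff(·, ℓ) has no critical points near r̄, while for (ℓ − ℓ̄)/a > 0 it has exactly two critical points near r̄, one a nondegenerate local maximum and one a nondegenerate local minimum. -/

import Mathlib

set_option maxHeartbeats 1000000

open Set Real Topology Filter

section AuxLemmas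

lemma AnalyticAt.deriv' {f : ℝ → ℝ} {x : ℝ} (hf : AnalyticAt ℝ f x) :
    AnalyticAt ℝ (deriv f) x :=
  (AnalyticOnNhd.deriv (fun _ hy => hy : AnalyticOnNhd ℝ f {y | AnalyticAt ℝ f y})) x hf

lemma tendsto_div_pow_of_iteratedDeriv_zero (m : ℕ) :
    ∀ (f : ℝ → ℝ) (x₀ : ℝ), AnalyticAt ℝ f x₀ →
    (∀ k < m, iteratedDeriv k f x₀ = 0) →
    Tendsto (fun x => f x / (x - x₀) ^ m) (𝓝[≠] x₀)
      (𝓝 (iteratedDeriv m f x₀ / m.factorial)) := by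
  induction m with
  | zero =>
    intro f x₀ hf _
    simpa using (hf.continuousAt.tendsto.mono_left nhdsWithin_le_nhds :
      Tendsto f (𝓝[≠] x₀) (𝓝 (f x₀)))
  | succ m IH =>
    intro f x₀ hf h0
    have hfd : ∀ᶠ x in 𝓝 x₀, AnalyticAt ℝ f x := hf.eventually_analyticAt
    have hIH := IH (deriv f) x₀ hf.deriv' (fun k hk => by
      rw [← iteratedDeriv_succ']
      exact h0 (k+1) (by omega))
    have hg : ∀ x : ℝ, HasDerivAt (fun x => (x - x₀) ^ (m+1))
        ((m+1 : ℕ) * (x - x₀) ^ m) x := by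
      intro x
      simpa [Function.comp_def] using ((hasDerivAt_pow (m+1) (x - x₀)).comp x
        ((hasDerivAt_id x).sub_const x₀))
    have hgd : deriv (fun x => (x - x₀) ^ (m+1)) =
        fun x => (m+1 : ℕ) * (x - x₀) ^ m := funext fun x => (hg x).deriv
    apply deriv.lhopital_zero_nhdsNE
    · exact eventually_nhdsWithin_of_eventually_nhds
        (hfd.mono fun x hx => hx.differentiableAt)
    · rw [hgd]
      filter_upwards [self_mem_nhdsWithin] with x hx
      have : x - x₀ ≠ 0 := sub_ne_zero.2 hx
      positivity
    · have : f x₀ = 0 := by simpa using h0 0 (by omega)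
      rw [← this]
      exact hf.continuousAt.tendsto.mono_left nhdsWithin_le_nhds
    · have : Tendsto (fun x : ℝ => (x - x₀) ^ (m+1)) (𝓝 x₀) (𝓝 0) := by
        have hc : Continuous (fun x : ℝ => (x - x₀) ^ (m+1)) := by continuity
        simpa using hc.tendsto x₀
      exact this.mono_left nhdsWithin_le_nhds
    · rw [hgd]
      have : Tendsto (fun x => deriv f x / (x - x₀) ^ m / (m+1 : ℕ))
          (𝓝[≠] x₀) (𝓝 (iteratedDeriv m (deriv f) x₀ / m.factorial / (m+1 : ℕ))) :=
        hIH.div_const _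
      have heq : (fun x => deriv f x / (x - x₀) ^ m / (m+1 : ℕ)) =
          fun x => deriv f x / ((m+1 : ℕ) * (x - x₀) ^ m) := by
        funext x; rw [div_div]; ring_nf
      rw [heq] at this
      convert this using 2
      rw [← iteratedDeriv_succ', Nat.factorial_succ]
      push_cast
      rw [div_div]
      ring_nf

end AuxLemmas

open Set Real Topology

/-- Bifurcation at a degenerate inflection point of the effective potential:
if the first nonvanishing derivative `∂_r^{n+1} V_eff(r̄,ℓ̄) = a ≠ 0` has `n`
even, then for `ℓ` near `ℓ̄` with `(ℓ-ℓ̄)/a < 0` there are no critical points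
near `r̄`, while for `(ℓ-ℓ̄)/a > 0` there are exactly two: a nondegenerate
local maximum and a nondegenerate local minimum. -/
theorem critical_point_bifurcation_even
    (V : ℝ → ℝ) (hV : AnalyticOnNhd ℝ V (Ioi (0:ℝ)))
    (rb ℓb : ℝ) (hrb : 0 < rb) (n : ℕ) (hn : Even n) (hn2 : 2 ≤ n)
    (hcrit : ∀ k, 1 ≤ k → k ≤ n →
      iteratedDeriv k (fun s => V s + ℓb / (2 * s ^ 2)) rb = 0)
    (ha : iteratedDeriv (n + 1) (fun s => V s + ℓb / (2 * s ^ 2)) rb ≠ 0) :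
    ∃ ε > (0:ℝ), ∃ δ > (0:ℝ), ∀ ℓ : ℝ, |ℓ - ℓb| < ε →
      (((ℓ - ℓb) / iteratedDeriv (n + 1)
            (fun s => V s + ℓb / (2 * s ^ 2)) rb < 0) →
        ∀ r : ℝ, |r - rb| < δ →
          deriv (fun s => V s + ℓ / (2 * s ^ 2)) r ≠ 0) ∧
      (((ℓ - ℓb) / iteratedDeriv (n + 1)
            (fun s => V s + ℓb / (2 * s ^ 2)) rb > 0) →
        ∃ rmax rmin : ℝ, rmax ≠ rmin ∧
          |rmax - rb| < δ ∧ |rmin - rb| < δ ∧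
          deriv (fun s => V s + ℓ / (2 * s ^ 2)) rmax = 0 ∧
          deriv (deriv (fun s => V s + ℓ / (2 * s ^ 2))) rmax < 0 ∧
          deriv (fun s => V s + ℓ / (2 * s ^ 2)) rmin = 0 ∧
          deriv (deriv (fun s => V s + ℓ / (2 * s ^ 2))) rmin > 0 ∧
          ∀ r : ℝ, |r - rb| < δ →
            deriv (fun s => V s + ℓ / (2 * s ^ 2)) r = 0 →
            r = rmax ∨ r = rmin) := by
  set F : ℝ → ℝ := fun s => V s + ℓb / (2 * s ^ 2) with hF_def
  set a : ℝ := iteratedDeriv (n + 1) F rb with ha_def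
  -- analyticity
  have hQ : AnalyticOnNhd ℝ (fun s : ℝ => ℓb / (2 * s ^ 2)) (Ioi 0) := by
    apply AnalyticOnNhd.div analyticOnNhd_const
    · exact AnalyticOnNhd.mul analyticOnNhd_const (analyticOnNhd_id.pow 2)
    · intro x hx
      have : (0:ℝ) < x := hx
      positivity
  have hF : AnalyticOnNhd ℝ F (Ioi 0) := hV.add hQ
  set g : ℝ → ℝ := deriv F with hg_def
  have hg : AnalyticOnNhd ℝ g (Ioi 0) := hF.deriv
  have hg' : AnalyticOnNhd ℝ (deriv g) (Ioi 0) := hg.deriv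
  have hrbI : rb ∈ Ioi (0:ℝ) := mem_Ioi.2 hrb
  -- iterated derivative facts
  have hg0 : ∀ k < n, iteratedDeriv k g rb = 0 := by
    intro k hk
    rw [hg_def, ← iteratedDeriv_succ']
    exact hcrit (k+1) (by omega) (by omega)
  have hgn : iteratedDeriv n g rb = a := by
    rw [hg_def, ← iteratedDeriv_succ', ha_def]
  have hgrb : g rb = 0 := by
    have := hcrit 1 le_rfl (by omega)
    rwa [iteratedDeriv_one] at this
  have hg'0 : ∀ k < n - 1, iteratedDeriv k (deriv g) rb = 0 := by
    intro k hk
    rw [← iteratedDeriv_succ']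
    exact hg0 (k+1) (by omega)
  have hg'n : iteratedDeriv (n-1) (deriv g) rb = a := by
    rw [← iteratedDeriv_succ']
    have hh : n - 1 + 1 = n := by omega
    rw [hh, hgn]
  -- tendsto facts
  have T1 : Tendsto (fun x => g x / (x - rb) ^ n) (𝓝[≠] rb)
      (𝓝 (a / n.factorial)) := by
    have := tendsto_div_pow_of_iteratedDeriv_zero n g rb (hg rb hrbI) hg0
    rwa [hgn] at this
  have T2 : Tendsto (fun x => deriv g x / (x - rb) ^ (n-1)) (𝓝[≠] rb)
      (𝓝 (a / (n-1).factorial)) := by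
    have := tendsto_div_pow_of_iteratedDeriv_zero (n-1) (deriv g) rb (hg' rb hrbI) hg'0
    rwa [hg'n] at this
  -- the function h
  set h : ℝ → ℝ := fun s => s ^ 3 * g s with hh_def
  have hhrb : h rb = 0 := by simp [hh_def, hgrb]
  have hdh : ∀ x : ℝ, 0 < x →
      HasDerivAt h (3 * x ^ 2 * g x + x ^ 3 * deriv g x) x := by
    intro x hx
    have h1 : HasDerivAt (fun s : ℝ => s ^ 3) (3 * x ^ 2) x := by
      simpa using hasDerivAt_pow 3 x
    have h2 : HasDerivAt g (deriv g x) x :=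
      ((hg x hx).differentiableAt).hasDerivAt
    simpa [hh_def, Pi.mul_def, mul_comm, mul_assoc, mul_left_comm] using h1.mul h2
  have Th : Tendsto (fun x => h x / (x - rb) ^ n) (𝓝[≠] rb)
      (𝓝 (rb ^ 3 * (a / n.factorial))) := by
    have hc : Tendsto (fun x : ℝ => x ^ 3) (𝓝[≠] rb) (𝓝 (rb ^ 3)) :=
      ((continuous_pow 3).tendsto rb).mono_left nhdsWithin_le_nhds
    have := hc.mul T1
    refine this.congr fun x => ?_
    rw [hh_def, mul_div_assoc]
  have Th' : Tendsto (fun x => deriv h x / (x - rb) ^ (n-1)) (𝓝[≠] rb)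
      (𝓝 (rb ^ 3 * (a / (n-1).factorial))) := by
    have hsub : Tendsto (fun x : ℝ => 3 * x ^ 2 * (x - rb)) (𝓝[≠] rb) (𝓝 0) := by
      have hc : Continuous (fun x : ℝ => 3 * x ^ 2 * (x - rb)) := by continuity
      have := (hc.tendsto rb).mono_left (nhdsWithin_le_nhds (s := {rb}ᶜ))
      simpa using this
    have hc3 : Tendsto (fun x : ℝ => x ^ 3) (𝓝[≠] rb) (𝓝 (rb ^ 3)) :=
      ((continuous_pow 3).tendsto rb).mono_left nhdsWithin_le_nhds
    have key : Tendsto (fun x => 3 * x ^ 2 * (x - rb) * (g x / (x - rb) ^ n)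
        + x ^ 3 * (deriv g x / (x - rb) ^ (n-1))) (𝓝[≠] rb)
        (𝓝 (0 * (a / n.factorial) + rb ^ 3 * (a / (n-1).factorial))) :=
      (hsub.mul T1).add (hc3.mul T2)
    rw [zero_mul, zero_add] at key
    refine key.congr' ?_
    have hmem : Ioi (0:ℝ) ∈ 𝓝 rb := isOpen_Ioi.mem_nhds hrbI
    filter_upwards [self_mem_nhdsWithin,
      mem_nhdsWithin_of_mem_nhds hmem] with x hx hx0
    have hxr : x - rb ≠ 0 := sub_ne_zero.2 hx
    have hde : deriv h x = 3 * x ^ 2 * g x + x ^ 3 * deriv g x := (hdh x hx0).deriv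
    have hpow : (x - rb) ^ n = (x - rb) ^ (n-1) * (x - rb) := by
      rw [← pow_succ]; congr 1; omega
    rw [hde] at *
    rw [hpow]
    field_simp
  -- sign extraction
  have ha' : a ≠ 0 := ha
  have hfac1 : (0:ℝ) < a * (rb ^ 3 * (a / n.factorial)) := by
    have : (0:ℝ) < n.factorial := by positivity
    rw [show a * (rb ^ 3 * (a / n.factorial)) = rb ^ 3 * (a * a) / n.factorial by ring]
    have haa : (0:ℝ) < a * a := mul_self_pos.2 ha'
    positivity
  have hfac2 : (0:ℝ) < a * (rb ^ 3 * (a / (n-1).factorial)) := by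
    have : (0:ℝ) < (n-1).factorial := by positivity
    rw [show a * (rb ^ 3 * (a / (n-1).factorial)) = rb ^ 3 * (a * a) / (n-1).factorial by ring]
    have haa : (0:ℝ) < a * a := mul_self_pos.2 ha'
    positivity
  have E1 : ∀ᶠ x in 𝓝[≠] rb, 0 < a * (h x / (x - rb) ^ n) :=
    (tendsto_const_nhds.mul Th).eventually (eventually_gt_nhds hfac1)
  have E2 : ∀ᶠ x in 𝓝[≠] rb, 0 < a * (deriv h x / (x - rb) ^ (n-1)) :=
    (tendsto_const_nhds.mul Th').eventually (eventually_gt_nhds hfac2)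
  have E3 : ∀ᶠ x in 𝓝[≠] rb, (0:ℝ) < x :=
    mem_nhdsWithin_of_mem_nhds (isOpen_Ioi.mem_nhds hrbI)
  have Eall := (E1.and E2).and E3
  rw [eventually_nhdsWithin_iff, Metric.eventually_nhds_iff] at Eall
  obtain ⟨δ₁, hδ₁pos, hδ₁⟩ := Eall
  simp only [Real.dist_eq, mem_compl_iff, mem_singleton_iff] at hδ₁
  have hoddn : Odd (n - 1) := Nat.Even.sub_odd (by omega) hn odd_one
  have Hpos : ∀ x : ℝ, x ≠ rb → |x - rb| < δ₁ → 0 < a * h x := by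
    intro x hx hxd
    obtain ⟨⟨h1, _⟩, _⟩ := hδ₁ hxd hx
    have hxe : (0:ℝ) < (x - rb) ^ n := hn.pow_pos (sub_ne_zero.2 hx)
    have := mul_pos h1 hxe
    rwa [show a * (h x / (x - rb) ^ n) * (x - rb) ^ n = a * h x by
      field_simp] at this
  have Dpos : ∀ x : ℝ, rb < x → |x - rb| < δ₁ → 0 < a * deriv h x := by
    intro x hx hxd
    obtain ⟨⟨_, h2⟩, _⟩ := hδ₁ hxd (ne_of_gt hx)
    have hxe : (0:ℝ) < (x - rb) ^ (n-1) := pow_pos (sub_pos.2 hx) _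
    have := mul_pos h2 hxe
    rwa [show a * (deriv h x / (x - rb) ^ (n-1)) * (x - rb) ^ (n-1) = a * deriv h x by
      have : (x - rb) ≠ 0 := sub_ne_zero.2 (ne_of_gt hx)
      field_simp] at this
  have Dneg : ∀ x : ℝ, x < rb → |x - rb| < δ₁ → a * deriv h x < 0 := by
    intro x hx hxd
    obtain ⟨⟨_, h2⟩, _⟩ := hδ₁ hxd (ne_of_lt hx)
    have hxe : (x - rb) ^ (n-1) < 0 := hoddn.pow_neg (sub_neg.2 hx)
    have := mul_neg_of_pos_of_neg h2 hxe
    rwa [show a * (deriv h x / (x - rb) ^ (n-1)) * (x - rb) ^ (n-1) = a * deriv h x by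
      have : (x - rb) ≠ 0 := sub_ne_zero.2 (ne_of_lt hx)
      field_simp] at this
  have Xpos : ∀ x : ℝ, x ≠ rb → |x - rb| < δ₁ → 0 < x := fun x hx hxd => (hδ₁ hxd hx).2
  -- delta and interval setup
  set δ : ℝ := min δ₁ rb / 2 with hδ_def
  have hδpos : 0 < δ := by positivity
  have hδδ₁ : δ < δ₁ := by
    have h1 : min δ₁ rb ≤ δ₁ := min_le_left _ _
    rw [hδ_def]; linarith
  have hδrb : δ ≤ rb / 2 := by
    have h1 : min δ₁ rb ≤ rb := min_le_right _ _
    rw [hδ_def]; linarith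
  have hball_pos : ∀ r : ℝ, |r - rb| < δ → 0 < r := by
    intro r hrd
    have := (abs_lt.1 hrd).1
    linarith
  set pp : ℝ := rb + δ / 2 with hpp_def
  set pm : ℝ := rb - δ / 2 with hpm_def
  have hppd : |pp - rb| < δ₁ := by
    rw [hpp_def]; rw [show rb + δ/2 - rb = δ/2 by ring, abs_of_pos (by positivity)]
    linarith
  have hpmd : |pm - rb| < δ₁ := by
    rw [hpm_def]; rw [show rb - δ/2 - rb = -(δ/2) by ring, abs_neg,
      abs_of_pos (by positivity)]
    linarith
  have hrbpp : rb < pp := by rw [hpp_def]; linarith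
  have hpmrb : pm < rb := by rw [hpm_def]; linarith
  have hppne : pp ≠ rb := ne_of_gt hrbpp
  have hpmne : pm ≠ rb := ne_of_lt hpmrb
  have hHpp : 0 < a * h pp := Hpos pp hppne hppd
  have hHpm : 0 < a * h pm := Hpos pm hpmne hpmd
  -- continuity and monotonicity of a*h
  have hconth : ContinuousOn (fun x => a * h x) (Ioi (0:ℝ)) := by
    simp only [hh_def]
    exact continuousOn_const.mul
      (((continuous_pow 3).continuousOn).mul hg.continuousOn)
  have hdiffah : ∀ x : ℝ, 0 < x → deriv (fun y => a * h y) x = a * deriv h x := by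
    intro x hx
    exact deriv_const_mul _ ((hdh x hx).differentiableAt)
  have hIccR : Icc rb (rb + δ) ⊆ Ioi (0:ℝ) := fun x hx => lt_of_lt_of_le hrb hx.1
  have hIccL : Icc (rb - δ) rb ⊆ Ioi (0:ℝ) := fun x hx => by
    have := hx.1; simp only [mem_Ioi]; linarith
  have SM : StrictMonoOn (fun x => a * h x) (Icc rb (rb + δ)) := by
    apply strictMonoOn_of_deriv_pos (convex_Icc _ _) (hconth.mono hIccR)
    intro x hx
    rw [interior_Icc] at hx
    rw [hdiffah x (lt_trans hrb hx.1)]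
    exact Dpos x hx.1 (by rw [abs_of_pos (by linarith [hx.1])]; linarith [hx.2])
  have SA : StrictAntiOn (fun x => a * h x) (Icc (rb - δ) rb) := by
    apply strictAntiOn_of_deriv_neg (convex_Icc _ _) (hconth.mono hIccL)
    intro x hx
    rw [interior_Icc] at hx
    have hx0 : 0 < x := by linarith [hx.1, hδrb]
    rw [hdiffah x hx0]
    exact Dneg x hx.2 (by rw [abs_of_neg (by linarith [hx.2])]; simp; linarith [hx.1])
  -- epsilon
  set ε : ℝ := min (a * h pp) (a * h pm) / |a| with hε_def
  have hεpos : 0 < ε := by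
    rw [hε_def]
    exact div_pos (lt_min hHpp hHpm) (abs_pos.2 ha')
  have hεa : |a| * ε = min (a * h pp) (a * h pm) := by
    rw [hε_def, mul_div_cancel₀ _ (abs_ne_zero.2 ha')]
  refine ⟨ε, hεpos, δ, hδpos, fun ℓ hℓ => ?_⟩
  set μ : ℝ := ℓ - ℓb with hμ_def
  -- derivative formula
  have hderiv : ∀ r : ℝ, 0 < r →
      deriv (fun s => V s + ℓ / (2 * s ^ 2)) r = g r - μ / r ^ 3 := by
    intro r hr
    have hfun : (fun s : ℝ => V s + ℓ / (2 * s ^ 2)) =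
        fun s => F s + μ / (2 * s ^ 2) := by
      funext s
      rw [hF_def]
      show V s + ℓ / (2 * s ^ 2) = V s + ℓb / (2 * s ^ 2) + μ / (2 * s ^ 2)
      rw [add_assoc, ← add_div, hμ_def]
      ring_nf
    rw [hfun]
    have hVd : HasDerivAt F (g r) r := ((hF r hr).differentiableAt).hasDerivAt
    have hu : HasDerivAt (fun s : ℝ => 2 * s ^ 2) (2 * (2 * r)) r := by
      simpa [mul_comm, mul_assoc] using ((hasDerivAt_pow 2 r).const_mul (2:ℝ))
    have hq : HasDerivAt (fun s : ℝ => μ / (2 * s ^ 2)) (-(μ / r ^ 3)) r := by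
      have := (hasDerivAt_const r μ).div hu (by positivity : (2:ℝ) * r ^ 2 ≠ 0)
      refine this.congr_deriv ?_
      have hr0 : r ≠ 0 := hr.ne'
      field_simp
      ring
    have := hVd.add hq
    rw [show (fun s => F s + μ / (2 * s ^ 2)) = F + fun s => μ / (2 * s ^ 2) from rfl, this.deriv]
    ring
  -- critical point characterization
  have hiff : ∀ r : ℝ, 0 < r →
      (deriv (fun s => V s + ℓ / (2 * s ^ 2)) r = 0 ↔ a * h r = a * μ) := by
    intro r hr
    rw [hderiv r hr, sub_eq_zero, mul_right_inj' ha']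
    have h3 : (r:ℝ) ^ 3 ≠ 0 := by positivity
    rw [eq_div_iff h3, hh_def]
    constructor
    · intro hc; rw [← hc]; ring
    · intro hc; rw [← hc]; ring
  -- second derivative formula at critical points
  have hsecond : ∀ r : ℝ, 0 < r →
      deriv (fun s => V s + ℓ / (2 * s ^ 2)) r = 0 →
      deriv (deriv (fun s => V s + ℓ / (2 * s ^ 2))) r = deriv h r / r ^ 3 := by
    intro r hr h0
    have hgr : g r = μ / r ^ 3 := by
      have := hderiv r hr; rw [h0] at this; linarith [this]
    have heq : deriv (fun s => V s + ℓ / (2 * s ^ 2)) =ᶠ[𝓝 r]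
        fun x => g x - μ / x ^ 3 := by
      filter_upwards [isOpen_Ioi.mem_nhds (mem_Ioi.2 hr)] with x hx
      exact hderiv x hx
    rw [heq.deriv_eq]
    have hgd : HasDerivAt g (deriv g r) r := (hg r hr).differentiableAt.hasDerivAt
    have hq : HasDerivAt (fun x : ℝ => μ / x ^ 3) (-(3 * μ / r ^ 4)) r := by
      have hu : HasDerivAt (fun x : ℝ => x ^ 3) (3 * r ^ 2) r := by
        simpa using hasDerivAt_pow 3 r
      have := (hasDerivAt_const r μ).div hu (by positivity : (r:ℝ) ^ 3 ≠ 0)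
      refine this.congr_deriv ?_
      have hr0 : r ≠ 0 := hr.ne'
      field_simp
      ring
    have hD := hgd.sub hq
    rw [show (fun x => g x - μ / x ^ 3) = g - fun x => μ / x ^ 3 from rfl, hD.deriv]
    have hdh' : deriv h r = 3 * r ^ 2 * g r + r ^ 3 * deriv g r := (hdh r hr).deriv
    rw [hdh', hgr]
    have h3 : (r:ℝ) ^ 3 ≠ 0 := by positivity
    field_simp
    ring
  constructor
  · -- no critical points
    intro hlt r hrd h0
    have hν : a * μ < 0 := by
      rcases div_neg_iff.1 hlt with ⟨h1, h2⟩ | ⟨h1, h2⟩ <;> nlinarith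
    have hr0 : 0 < r := hball_pos r hrd
    have hcr : a * h r = a * μ := (hiff r hr0).1 h0
    rcases eq_or_ne r rb with hre | hre
    · rw [hre, hhrb, mul_zero] at hcr
      linarith
    · have := Hpos r hre (lt_trans hrd hδδ₁)
      linarith
  · -- two critical points
    intro hgt
    have hν : 0 < a * μ := by
      rcases div_pos_iff.1 hgt with ⟨h1, h2⟩ | ⟨h1, h2⟩ <;> nlinarith
    have hbound : a * μ < min (a * h pp) (a * h pm) := by
      have h1 : a * μ = |a| * |μ| := by
        rw [← abs_mul]; exact (abs_of_pos hν).symm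
      have h2 : |a| * |μ| < |a| * ε :=
        mul_lt_mul_of_pos_left hℓ (abs_pos.2 ha')
      rw [h1, ← hεa] at *
      linarith
    have hbpp : a * μ < a * h pp := lt_of_lt_of_le hbound (min_le_left _ _)
    have hbpm : a * μ < a * h pm := lt_of_lt_of_le hbound (min_le_right _ _)
    -- IVT on the right
    have hIccR2 : Icc rb pp ⊆ Ioi (0:ℝ) := fun x hx => lt_of_lt_of_le hrb hx.1
    have hmemR : a * μ ∈ Ioo ((fun x => a * h x) rb) ((fun x => a * h x) pp) := by
      simp only [hhrb, mul_zero]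
      exact ⟨hν, hbpp⟩
    obtain ⟨rp, hrpmem, hrpval⟩ :=
      intermediate_value_Ioo (le_of_lt hrbpp) (hconth.mono hIccR2) hmemR
    -- IVT on the left
    have hIccL2 : Icc pm rb ⊆ Ioi (0:ℝ) := fun x hx => by
      have := hx.1; simp only [mem_Ioi]; have : rb - δ/2 ≤ x := by rw [← hpm_def]; exact hx.1
      linarith [hδrb]
    have hmemL : a * μ ∈ Ioo ((fun x => a * h x) rb) ((fun x => a * h x) pm) := by
      simp only [hhrb, mul_zero]
      exact ⟨hν, hbpm⟩
    obtain ⟨rm, hrmmem, hrmval⟩ :=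
      intermediate_value_Ioo' (le_of_lt hpmrb) (hconth.mono hIccL2) hmemL
    simp only [mem_Ioo] at hrpmem hrmmem
    -- basic location facts
    have hrpδ : |rp - rb| < δ := by
      rw [abs_of_pos (by linarith [hrpmem.1])]
      have : rp < rb + δ/2 := by rw [← hpp_def]; exact hrpmem.2
      linarith
    have hrmδ : |rm - rb| < δ := by
      rw [abs_of_neg (by linarith [hrmmem.2])]
      have : rb - δ/2 < rm := by rw [← hpm_def]; exact hrmmem.1
      linarith
    have hrp0 : 0 < rp := hball_pos rp hrpδ
    have hrm0 : 0 < rm := hball_pos rm hrmδ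
    have hrpcrit : deriv (fun s => V s + ℓ / (2 * s ^ 2)) rp = 0 :=
      (hiff rp hrp0).2 hrpval
    have hrmcrit : deriv (fun s => V s + ℓ / (2 * s ^ 2)) rm = 0 :=
      (hiff rm hrm0).2 hrmval
    have hrpsec := hsecond rp hrp0 hrpcrit
    have hrmsec := hsecond rm hrm0 hrmcrit
    have hrpD : 0 < a * deriv h rp := Dpos rp hrpmem.1 (lt_trans hrpδ hδδ₁)
    have hrmD : a * deriv h rm < 0 := Dneg rm hrmmem.2 (lt_trans hrmδ hδδ₁)
    have hrpne : rp ≠ rm := by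
      intro hc; rw [hc] at hrpmem; linarith [hrpmem.1, hrmmem.2]
    -- uniqueness
    have huniq : ∀ r : ℝ, |r - rb| < δ →
        deriv (fun s => V s + ℓ / (2 * s ^ 2)) r = 0 → r = rp ∨ r = rm := by
      intro r hrd h0
      have hr0 : 0 < r := hball_pos r hrd
      have hcr : a * h r = a * μ := (hiff r hr0).1 h0
      have hrne : r ≠ rb := by
        intro hc
        rw [hc, hhrb, mul_zero] at hcr
        linarith
      rcases hrne.lt_or_gt with hlt2 | hgt2
      · right
        apply SA.injOn ?_ ?_ ?_
        · constructor
          · have := (abs_lt.1 hrd).1; linarith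
          · exact le_of_lt hlt2
        · constructor
          · have : rb - δ/2 < rm := by rw [← hpm_def]; exact hrmmem.1
            linarith
          · exact le_of_lt hrmmem.2
        · exact hcr.trans hrmval.symm
      · left
        apply SM.injOn ?_ ?_ ?_
        · constructor
          · exact le_of_lt hgt2
          · have := (abs_lt.1 hrd).2; linarith
        · constructor
          · exact le_of_lt hrpmem.1
          · have : rp < rb + δ/2 := by rw [← hpp_def]; exact hrpmem.2
            linarith
        · exact hcr.trans hrpval.symm
    -- split on sign of a
    rcases ha'.lt_or_gt with hA | hA
    · -- a < 0 : rp is max, rm is min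
      refine ⟨rp, rm, hrpne, hrpδ, hrmδ, hrpcrit, ?_, hrmcrit, ?_, fun r hrd h0 => huniq r hrd h0⟩
      · rw [hrpsec]
        have hdp : deriv h rp < 0 := by
          rcases mul_pos_iff.1 hrpD with ⟨h1, h2⟩ | ⟨h1, h2⟩ <;> linarith
        have : (0:ℝ) < rp ^ 3 := by positivity
        exact div_neg_of_neg_of_pos hdp this
      · rw [hrmsec]
        have hdm : 0 < deriv h rm := by
          rcases mul_neg_iff.1 hrmD with ⟨h1, h2⟩ | ⟨h1, h2⟩ <;> linarith
        have : (0:ℝ) < rm ^ 3 := by positivity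
        exact div_pos hdm this
    · -- a > 0 : rm is max, rp is min
      refine ⟨rm, rp, fun hc => hrpne hc.symm, hrmδ, hrpδ, hrmcrit, ?_, hrpcrit, ?_,
        fun r hrd h0 => (huniq r hrd h0).symm⟩
      · rw [hrmsec]
        have hdm : deriv h rm < 0 := by
          rcases mul_neg_iff.1 hrmD with ⟨h1, h2⟩ | ⟨h1, h2⟩ <;> linarith
        have : (0:ℝ) < rm ^ 3 := by positivity
        exact div_neg_of_neg_of_pos hdm this
      · rw [hrpsec]
        have hdp : 0 < deriv h rp := by
          rcases mul_pos_iff.1 hrpD with ⟨h1, h2⟩ | ⟨h1, h2⟩ <;> linarith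
        have : (0:ℝ) < rp ^ 3 := by positivity
        exact div_pos hdp this
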